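/- Let X₁ and X₂ be metric spaces with X₁ ⊆ X₂, the inclusion continuous, X₁ separable, and suppose every closed ball of X₁ is closed in the topology of X₂. Then every Borel set of X₁ is a Borel set of X₂; in particular X₁ itself is a Borel subset of X₂, and the Borel σ-algebra of X₁ equals the trace on X₁ of the Borel σ-algebra of X₂. -/

import Mathlib

open MeasureTheory

/-- If `X₁` is a separable metric space continuously embedded in a metric space
`X₂`, and every closed ball of `X₁` is closed in the topology of `X₂`, then
every Borel set of `X₁` is a Borel set of `X₂` (as a subset, via the image);
in particular `X₁` (i.e. the range of the embedding) is Borel in `X₂`, and the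
Borel σ-algebra of `X₁` is the trace of that of `X₂`. -/
theorem borel_trace_of_embedding
    {X₁ X₂ : Type*} [MetricSpace X₁] [MetricSpace X₂]
    [TopologicalSpace.SeparableSpace X₁]
    [MeasurableSpace X₁] [BorelSpace X₁] [MeasurableSpace X₂] [BorelSpace X₂]
    (ι : X₁ → X₂) (hcont : Continuous ι) (hinj : Function.Injective ι)
    (hballs : ∀ (x : X₁) (r : ℝ), IsClosed (ι '' Metric.closedBall x r)) :
    (∀ S : Set X₁, MeasurableSet S → MeasurableSet (ι '' S)) ∧
    MeasurableSet (Set.range ι) ∧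
    (∀ S : Set X₁, MeasurableSet S ↔ ∃ M : Set X₂, MeasurableSet M ∧ ι ⁻¹' M = S) := by
  classical
  have key : ∀ S : Set X₁, MeasurableSet S → MeasurableSet (ι '' S) := by
    rcases isEmpty_or_nonempty X₁ with hE | hN
    · intro S _
      have : S = ∅ := Set.eq_empty_of_isEmpty S
      simp [this]
    · -- every open set's image is measurable
      have hU : ∀ U : Set X₁, IsOpen U → MeasurableSet (ι '' U) := by
        intro U hUopen
        set u := TopologicalSpace.denseSeq X₁ with hu
        have hdense := TopologicalSpace.denseRange_denseSeq X₁
        set f : ℕ × ℚ → Set X₁ := fun p =>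
          if Metric.closedBall (u p.1) (p.2 : ℝ) ⊆ U then Metric.closedBall (u p.1) (p.2 : ℝ)
          else ∅ with hf
        have hUeq : U = ⋃ p, f p := by
          apply Set.Subset.antisymm
          · intro x hx
            obtain ⟨ε, hε, hball⟩ := Metric.isOpen_iff.1 hUopen x hx
            obtain ⟨n, hn⟩ := Metric.denseRange_iff.1 hdense x (ε / 3) (by linarith)
            obtain ⟨q, hq1, hq2⟩ := exists_rat_btwn (show ε / 3 < ε / 2 by linarith)
            have hsub : Metric.closedBall (u n) (q : ℝ) ⊆ U := by
              intro y hy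
              apply hball
              have h1 : dist y x ≤ dist y (u n) + dist (u n) x := dist_triangle _ _ _
              have h2 : dist y (u n) ≤ (q : ℝ) := hy
              have h3 : dist (u n) x < ε / 3 := by rw [dist_comm]; exact hn
              have : dist y x < ε := by linarith
              exact Metric.mem_ball.2 this
            refine Set.mem_iUnion.2 ⟨(n, q), ?_⟩
            simp only [hf, if_pos hsub]
            exact Metric.mem_closedBall.2 (le_of_lt (lt_trans hn hq1))
          · intro x hx
            obtain ⟨p, hp⟩ := Set.mem_iUnion.1 hx
            by_cases h : Metric.closedBall (u p.1) ((p.2 : ℝ)) ⊆ U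
            · exact h (by simpa [hf, h] using hp)
            · simp [hf, h] at hp
        rw [hUeq, Set.image_iUnion]
        apply MeasurableSet.iUnion
        intro p
        by_cases h : Metric.closedBall (u p.1) ((p.2 : ℝ)) ⊆ U
        · simp only [hf, if_pos h]
          exact (hballs _ _).measurableSet
        · simp [hf, h]
      have hrange : MeasurableSet (Set.range ι) := by
        rw [← Set.image_univ]; exact hU _ isOpen_univ
      intro S hS
      refine MeasurableSet.induction_on_open (C := fun t _ => MeasurableSet (ι '' t)) (fun U hUopen => hU U hUopen)
        (fun s hs ih => ?_) (fun g hdisj hmeas ih => ?_) S hS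
      · have : ι '' sᶜ = Set.range ι \ ι '' s := by
          rw [Set.compl_eq_univ_diff, Set.image_diff hinj, Set.image_univ]
        rw [this]
        exact hrange.diff ih
      · rw [Set.image_iUnion]
        exact MeasurableSet.iUnion ih
  have hrange : MeasurableSet (Set.range ι) := by
    rw [← Set.image_univ]; exact key _ MeasurableSet.univ
  refine ⟨key, hrange, fun S => ⟨fun hS => ⟨ι '' S, key S hS, ?_⟩, ?_⟩⟩
  · exact Set.preimage_image_eq S hinj
  · rintro ⟨M, hM, rfl⟩
    exact hcont.measurable hM
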